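/- Let (s_{i_1}, ..., s_{i_a}) be any word in the simple transpositions of the symmetric group S_n, and let u ∈ S_n. If some subword (s_{i_{k_1}}, ..., s_{i_{k_c}}) (with k_1 < k_2 < ... < k_c) is a reduced word for u, then the Demazure product s_{i_1} * s_{i_2} * ... * s_{i_a} is greater than or equal to u in Bruhat order. -/

import Mathlib

/-- The simple transposition `s_{i+1} = (i+1, i+2)` (1-indexed) in the symmetric group
`S_{n+1}` of permutations of `Fin (n+1)`. -/
def sgen {n : ℕ} (i : Fin n) : Equiv.Perm (Fin (n + 1)) :=
  Equiv.swap i.castSucc i.succ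

/-- Coxeter length of a permutation, as the number of inversions. -/
def len {n : ℕ} (w : Equiv.Perm (Fin n)) : ℕ :=
  (Finset.univ.filter fun p : Fin n × Fin n => p.1 < p.2 ∧ w p.2 < w p.1).card

/-- Product of the word of simple transpositions indexed by `l`. -/
def wordProd {n : ℕ} (l : List (Fin n)) : Equiv.Perm (Fin (n + 1)) :=
  (l.map sgen).prod

/-- `l` is a reduced word for `w`. -/
def IsReducedWord {n : ℕ} (l : List (Fin n)) (w : Equiv.Perm (Fin (n + 1))) : Prop :=
  wordProd l = w ∧ l.length = len w

/-- The Demazure product `s_{i_1} * s_{i_2} * ⋯ * s_{i_a}` of a word. -/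
def demazure {n : ℕ} : List (Fin n) → Equiv.Perm (Fin (n + 1))
  | [] => 1
  | i :: rest =>
    if len (sgen i * demazure rest) > len (demazure rest) then sgen i * demazure rest
    else demazure rest

/-- Bruhat order on `S_n`, via the rank-matrix characterization:
`u ≤ v` iff `#([i] ∩ u[j]) ≥ #([i] ∩ v[j])` for all `i, j`. -/
def BruhatLE {n : ℕ} (u v : Equiv.Perm (Fin n)) : Prop :=
  ∀ i j : ℕ,
    (Finset.univ.filter fun a : Fin n => (a : ℕ) < j ∧ ((v a : ℕ)) < i).card ≤
    (Finset.univ.filter fun a : Fin n => (a : ℕ) < j ∧ ((u a : ℕ)) < i).card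

namespace DemazureAux
open Finset
variable {m n : ℕ}

/-- Rank function. -/
def r (w : Equiv.Perm (Fin m)) (i j : ℕ) : ℕ :=
  (Finset.univ.filter fun a : Fin m => (a : ℕ) < j ∧ ((w a : ℕ)) < i).card

lemma bruhat_iff_r (u v : Equiv.Perm (Fin m)) :
    BruhatLE u v ↔ ∀ i j : ℕ, r v i j ≤ r u i j := Iff.rfl

lemma r_inv (w : Equiv.Perm (Fin m)) (i j : ℕ) :
    r w i j = (Finset.univ.filter fun b : Fin m => (b : ℕ) < i ∧ ((w⁻¹ b : ℕ)) < j).card := by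
  apply Finset.card_bij (fun a _ => w a)
  · intro a ha
    simp only [mem_filter, mem_univ, true_and] at ha ⊢
    simp [ha.1, ha.2]
  · intro a ha b hb hab
    exact w.injective hab
  · intro b hb
    simp only [mem_filter, mem_univ, true_and] at hb ⊢
    exact ⟨w⁻¹ b, ⟨hb.2, by simp [hb.1]⟩, by simp⟩

lemma r_succ (w : Equiv.Perm (Fin m)) (j : ℕ) (b : Fin m) :
    r w ((b : ℕ) + 1) j = r w (b : ℕ) j + if ((w⁻¹ b : ℕ) < j) then 1 else 0 := by
  classical
  have hsplit : (Finset.univ.filter fun a : Fin m => (a : ℕ) < j ∧ (w a : ℕ) < (b : ℕ) + 1)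
      = (Finset.univ.filter fun a : Fin m => (a : ℕ) < j ∧ (w a : ℕ) < (b : ℕ)) ∪
        (Finset.univ.filter fun a : Fin m => (a : ℕ) < j ∧ w a = b) := by
    ext a
    simp only [mem_filter, mem_union, mem_univ, true_and, Fin.ext_iff]
    omega
  have hdisj : Disjoint
      (Finset.univ.filter fun a : Fin m => (a : ℕ) < j ∧ (w a : ℕ) < (b : ℕ))
      (Finset.univ.filter fun a : Fin m => (a : ℕ) < j ∧ w a = b) := by
    rw [Finset.disjoint_left]
    intro a ha hb
    simp only [mem_filter, mem_univ, true_and, Fin.ext_iff] at ha hb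
    omega
  have hsingle : (Finset.univ.filter fun a : Fin m => (a : ℕ) < j ∧ w a = b)
      = if ((w⁻¹ b : ℕ) < j) then {w⁻¹ b} else ∅ := by
    split_ifs with h
    · ext a
      simp only [mem_filter, mem_univ, true_and, mem_singleton]
      constructor
      · rintro ⟨-, h2⟩; rw [← h2]; simp
      · rintro rfl; exact ⟨h, by simp⟩
    · ext a
      simp only [mem_filter, mem_univ, true_and, Finset.notMem_empty, iff_false, not_and]
      intro h1 h2
      rw [← h2] at h; simp at h; omega
  rw [r, r, hsplit, Finset.card_union_of_disjoint hdisj, hsingle]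
  split_ifs <;> simp

lemma card_val_lt (t : ℕ) :
    ((Finset.univ : Finset (Fin m)).filter fun a : Fin m => (a : ℕ) < t).card = min t m := by
  apply Finset.card_eq_of_bijective (fun i h => ⟨i, by omega⟩)
  · intro a ha
    simp only [mem_filter, mem_univ, true_and] at ha
    exact ⟨(a : ℕ), by omega, by simp⟩
  · intro i h
    simp only [mem_filter, mem_univ, true_and]
    omega
  · intro i j hi hj hij
    simpa [Fin.ext_iff] using hij

lemma card_le_filter_mono {p q : Fin m → Prop} [DecidablePred p] [DecidablePred q]
    (h : ∀ a, p a → q a) :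
    (Finset.univ.filter p).card ≤ (Finset.univ.filter q).card := by
  apply Finset.card_le_card
  intro a ha
  simp only [mem_filter, mem_univ, true_and] at ha ⊢
  exact h a ha

lemma r_le_min (w : Equiv.Perm (Fin m)) (i j : ℕ) : r w i j ≤ min (min i j) m := by
  have h1 : r w i j ≤ min j m := by
    rw [r, ← card_val_lt (m := m) j]
    exact card_le_filter_mono fun a ha => ha.1
  have h2 : r w i j ≤ min i m := by
    rw [r_inv, ← card_val_lt (m := m) i]
    exact card_le_filter_mono fun a ha => ha.1
  omega

lemma r_one (i j : ℕ) : r (1 : Equiv.Perm (Fin m)) i j = min (min i j) m := by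
  rw [r, ← card_val_lt (m := m) (min i j)]
  congr 1
  ext a
  simp only [Finset.mem_filter]
  simp only [Finset.mem_filter, mem_univ, true_and, Equiv.Perm.one_apply]
  omega

lemma bruhat_one (v : Equiv.Perm (Fin m)) : BruhatLE 1 v := by
  rw [bruhat_iff_r]
  intro i j
  rw [r_one]
  exact r_le_min v i j

lemma sgen_castSucc (k : Fin n) : sgen k k.castSucc = k.succ := by
  simp [sgen]

lemma sgen_succ (k : Fin n) : sgen k k.succ = k.castSucc := by
  simp [sgen]

lemma castSucc_lt_succ (k : Fin n) : k.castSucc < k.succ := by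
  simp [Fin.lt_def]

lemma sgen_mono (k : Fin n) {x y : Fin (n + 1)} (hxy : x < y)
    (hne : ¬(x = k.castSucc ∧ y = k.succ)) : sgen k x < sgen k y := by
  have hk1 : ((k.castSucc : Fin (n+1)) : ℕ) = (k : ℕ) := rfl
  have hk2 : ((k.succ : Fin (n+1)) : ℕ) = (k : ℕ) + 1 := rfl
  rw [sgen, Equiv.swap_apply_def, Equiv.swap_apply_def]
  split_ifs with h1 h2 h3 h4 h5 h6 <;>
    simp only [Fin.lt_def, Fin.ext_iff, hk1, hk2] at * <;> omega

lemma sgen_lt_iff (k : Fin n) {x y : Fin (n + 1)}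
    (hne : ¬(x = k.castSucc ∧ y = k.succ)) (hne' : ¬(y = k.castSucc ∧ x = k.succ)) :
    sgen k x < sgen k y ↔ x < y := by
  constructor
  · intro h
    rcases lt_trichotomy x y with h' | h' | h'
    · exact h'
    · subst h'; exact absurd h (lt_irrefl _)
    · exact absurd (sgen_mono k h' hne') (lt_asymm h)
  · intro h; exact sgen_mono k h hne

lemma len_sgen_mul (k : Fin n) (w : Equiv.Perm (Fin (n + 1)))
    (h : w⁻¹ k.castSucc < w⁻¹ k.succ) : len (sgen k * w) = len w + 1 := by
  classical
  set p := w⁻¹ k.castSucc with hp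
  set q := w⁻¹ k.succ with hq
  have hwp : w p = k.castSucc := by simp [hp]
  have hwq : w q = k.succ := by simp [hq]
  have hset : (Finset.univ.filter fun pr : Fin (n+1) × Fin (n+1) =>
        pr.1 < pr.2 ∧ (sgen k * w) pr.2 < (sgen k * w) pr.1)
      = insert (p, q) (Finset.univ.filter fun pr : Fin (n+1) × Fin (n+1) =>
        pr.1 < pr.2 ∧ w pr.2 < w pr.1) := by
    ext ⟨a, b⟩
    simp only [Finset.mem_filter, Finset.mem_insert]
    simp only [Finset.mem_filter, mem_univ, true_and, Finset.mem_insert, Prod.mk.injEq,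
      Equiv.Perm.mul_apply]
    constructor
    · rintro ⟨hab, hlt⟩
      by_cases hc1 : w a = k.castSucc ∧ w b = k.succ
      · left
        exact ⟨w.injective (by rw [hc1.1, hwp]), w.injective (by rw [hc1.2, hwq])⟩
      · by_cases hc2 : w b = k.castSucc ∧ w a = k.succ
        · exfalso
          have hb : b = p := w.injective (by rw [hc2.1, hwp])
          have ha : a = q := w.injective (by rw [hc2.2, hwq])
          rw [ha, hb] at hab
          exact absurd hab (lt_asymm h)
        · right
          exact ⟨hab, (sgen_lt_iff k hc2 hc1).mp hlt⟩
    · rintro (⟨rfl, rfl⟩ | ⟨hab, hlt⟩)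
      · refine ⟨h, ?_⟩
        rw [hwp, hwq, sgen_castSucc, sgen_succ]
        exact castSucc_lt_succ k
      · refine ⟨hab, ?_⟩
        apply sgen_mono k hlt
        rintro ⟨hb, ha⟩
        have hbp : b = p := w.injective (by rw [hb, hwp])
        have haq : a = q := w.injective (by rw [ha, hwq])
        rw [haq, hbp] at hab
        exact absurd hab (lt_asymm h)
  have hnotmem : (p, q) ∉ (Finset.univ.filter fun pr : Fin (n+1) × Fin (n+1) =>
        pr.1 < pr.2 ∧ w pr.2 < w pr.1) := by
    simp only [mem_filter, mem_univ, true_and, not_and, hwp, hwq]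
    intro _
    exact lt_asymm (castSucc_lt_succ k)
  rw [len, len, hset, Finset.card_insert_of_notMem hnotmem]

lemma inv_ne (k : Fin n) (w : Equiv.Perm (Fin (n + 1))) :
    w⁻¹ k.castSucc ≠ w⁻¹ k.succ := by
  intro h
  have := w⁻¹.injective h
  have h1 : ((k.castSucc : Fin (n+1)) : ℕ) = ((k.succ : Fin (n+1)) : ℕ) := by rw [this]
  simp [Fin.ext_iff] at h1

lemma sgen_mul_sgen_mul (k : Fin n) (w : Equiv.Perm (Fin (n + 1))) :
    sgen k * (sgen k * w) = w := by
  rw [← mul_assoc, sgen, Equiv.swap_mul_self, one_mul]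

lemma inv_sgen_mul (k : Fin n) (w : Equiv.Perm (Fin (n + 1))) (x : Fin (n+1)) :
    (sgen k * w)⁻¹ x = w⁻¹ (sgen k x) := by
  have : (sgen k)⁻¹ = sgen k := by
    rw [sgen]; exact Equiv.swap_inv _ _
  rw [mul_inv_rev, Equiv.Perm.mul_apply, this]

lemma len_sgen_lt_iff (k : Fin n) (w : Equiv.Perm (Fin (n + 1))) :
    len w < len (sgen k * w) ↔ w⁻¹ k.castSucc < w⁻¹ k.succ := by
  constructor
  · intro hlen
    by_contra hc
    have hqp : w⁻¹ k.succ < w⁻¹ k.castSucc :=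
      lt_of_le_of_ne (not_lt.mp hc) (Ne.symm (inv_ne k w))
    have h2 : (sgen k * w)⁻¹ k.castSucc < (sgen k * w)⁻¹ k.succ := by
      rw [inv_sgen_mul, inv_sgen_mul, sgen_castSucc, sgen_succ]
      exact hqp
    have := len_sgen_mul k (sgen k * w) h2
    rw [sgen_mul_sgen_mul] at this
    omega
  · intro h
    have := len_sgen_mul k w h
    omega

lemma len_sgen_mul_le (k : Fin n) (w : Equiv.Perm (Fin (n + 1))) :
    len (sgen k * w) ≤ len w + 1 := by
  rcases lt_trichotomy (w⁻¹ k.castSucc) (w⁻¹ k.succ) with h | h | h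
  · rw [len_sgen_mul k w h]
  · exact absurd h (inv_ne k w)
  · have h2 : (sgen k * w)⁻¹ k.castSucc < (sgen k * w)⁻¹ k.succ := by
      rw [inv_sgen_mul, inv_sgen_mul, sgen_castSucc, sgen_succ]
      exact h
    have := len_sgen_mul k (sgen k * w) h2
    rw [sgen_mul_sgen_mul] at this
    omega

lemma sgen_coe_lt (k : Fin n) (x : Fin (n + 1)) {i : ℕ} (hi : i ≠ (k : ℕ) + 1) :
    ((sgen k x : ℕ) < i ↔ (x : ℕ) < i) := by
  have hk1 : ((k.castSucc : Fin (n+1)) : ℕ) = (k : ℕ) := rfl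
  have hk2 : ((k.succ : Fin (n+1)) : ℕ) = (k : ℕ) + 1 := rfl
  rw [sgen, Equiv.swap_apply_def]
  split_ifs with h1 h2 <;> simp only [Fin.ext_iff, hk1, hk2] at * <;> omega

lemma r_sgen_ne (k : Fin n) (w : Equiv.Perm (Fin (n + 1))) {i : ℕ}
    (hi : i ≠ (k : ℕ) + 1) (j : ℕ) : r (sgen k * w) i j = r w i j := by
  rw [r, r]
  congr 1
  apply Finset.filter_congr
  intro a _
  simp only [Equiv.Perm.mul_apply, sgen_coe_lt k (w a) hi]

lemma len_one : len (1 : Equiv.Perm (Fin m)) = 0 := by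
  rw [len, Finset.card_eq_zero]
  ext ⟨a, b⟩
  simp only [Finset.mem_filter]
  simp only [Finset.mem_filter, mem_univ, true_and, Equiv.Perm.one_apply, Finset.notMem_empty,
    iff_false, not_and]
  intro h1 h2
  exact absurd h2 (lt_asymm h1)

lemma wordProd_nil : wordProd ([] : List (Fin n)) = 1 := rfl

lemma wordProd_cons (k : Fin n) (t : List (Fin n)) :
    wordProd (k :: t) = sgen k * wordProd t := by
  rw [wordProd, wordProd, List.map_cons, List.prod_cons]

lemma len_wordProd_le (l : List (Fin n)) : len (wordProd l) ≤ l.length := by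
  induction l with
  | nil => rw [wordProd_nil, len_one]; simp
  | cons k t ih =>
    rw [wordProd_cons, List.length_cons]
    calc len (sgen k * wordProd t) ≤ len (wordProd t) + 1 := len_sgen_mul_le k _
      _ ≤ t.length + 1 := by omega

lemma r_succ_cc (w : Equiv.Perm (Fin (n+1))) (k : Fin n) (j : ℕ) :
    r w ((k : ℕ) + 1) j = r w (k : ℕ) j + if ((w⁻¹ k.castSucc : ℕ) < j) then 1 else 0 := by
  simpa using r_succ w j k.castSucc

lemma r_succ_cs (w : Equiv.Perm (Fin (n+1))) (k : Fin n) (j : ℕ) :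
    r w ((k : ℕ) + 2) j = r w ((k : ℕ) + 1) j + if ((w⁻¹ k.succ : ℕ) < j) then 1 else 0 := by
  simpa using r_succ w j k.succ

lemma r_sgen_top (k : Fin n) (w : Equiv.Perm (Fin (n+1))) (j : ℕ) :
    r (sgen k * w) ((k : ℕ) + 1) j =
      r w (k : ℕ) j + if ((w⁻¹ k.succ : ℕ) < j) then 1 else 0 := by
  rw [r_succ_cc (sgen k * w) k j, r_sgen_ne k w (by omega) j, inv_sgen_mul, sgen_castSucc]

lemma bruhat_step (k : Fin n) (D : Equiv.Perm (Fin (n+1))) :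
    BruhatLE D (if len (sgen k * D) > len D then sgen k * D else D) := by
  split_ifs with hbr
  · have hD : (D⁻¹ k.castSucc : ℕ) < (D⁻¹ k.succ : ℕ) := (len_sgen_lt_iff k D).mp hbr
    rw [bruhat_iff_r]
    intro i j
    by_cases hi : i = (k : ℕ) + 1
    · subst hi
      rw [r_sgen_top, r_succ_cc]
      split_ifs <;> omega
    · rw [r_sgen_ne k D hi]
  · rw [bruhat_iff_r]
    intro i j
    exact le_refl _

lemma bruhat_key (k : Fin n) (x D : Equiv.Perm (Fin (n+1))) (hxD : BruhatLE x D)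
    (hx : x⁻¹ k.castSucc < x⁻¹ k.succ) :
    BruhatLE (sgen k * x) (if len (sgen k * D) > len D then sgen k * D else D) := by
  rw [bruhat_iff_r] at hxD ⊢
  have hx' : (x⁻¹ k.castSucc : ℕ) < (x⁻¹ k.succ : ℕ) := hx
  by_cases hbr : len (sgen k * D) > len D
  · rw [if_pos hbr]
    intro i j
    by_cases hi : i = (k : ℕ) + 1
    · subst hi
      have A1 := hxD (k : ℕ) j
      have A2 := hxD ((k : ℕ) + 1) j
      have A3 := hxD ((k : ℕ) + 2) j
      rw [r_succ_cc D k j, r_succ_cc x k j] at A2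
      rw [r_succ_cs D k j, r_succ_cs x k j, r_succ_cc D k j, r_succ_cc x k j] at A3
      have hD : (D⁻¹ k.castSucc : ℕ) < (D⁻¹ k.succ : ℕ) := (len_sgen_lt_iff k D).mp hbr
      rw [r_sgen_top k x j, r_sgen_top k D j]
      split_ifs at * <;> omega
    · rw [r_sgen_ne k x hi, r_sgen_ne k D hi]
      exact hxD i j
  · rw [if_neg hbr]
    intro i j
    by_cases hi : i = (k : ℕ) + 1
    · subst hi
      have A1 := hxD (k : ℕ) j
      have A2 := hxD ((k : ℕ) + 1) j
      have A3 := hxD ((k : ℕ) + 2) j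
      rw [r_succ_cc D k j, r_succ_cc x k j] at A2
      rw [r_succ_cs D k j, r_succ_cs x k j, r_succ_cc D k j, r_succ_cc x k j] at A3
      have hD : (D⁻¹ k.succ : ℕ) < (D⁻¹ k.castSucc : ℕ) := by
        have h1 : ¬ (D⁻¹ k.castSucc < D⁻¹ k.succ) := fun h => hbr ((len_sgen_lt_iff k D).mpr h)
        have h2 := inv_ne k D
        rw [Fin.lt_def] at h1
        simp only [Ne, Fin.ext_iff] at h2
        omega
      rw [r_sgen_top k x j, r_succ_cc D k j]
      split_ifs at * <;> omega
    · rw [r_sgen_ne k x hi]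
      exact hxD i j

lemma demazure_cons (k : Fin n) (rest : List (Fin n)) :
    demazure (k :: rest) =
      if len (sgen k * demazure rest) > len (demazure rest) then sgen k * demazure rest
      else demazure rest := rfl

end DemazureAux

open DemazureAux in
/-- If some subword of the word `l` is a reduced word for `u`, then the Demazure
product of `l` is greater than or equal to `u` in Bruhat order. -/
theorem stmt0 {n : ℕ} (l l' : List (Fin n)) (u : Equiv.Perm (Fin (n + 1)))
    (hsub : l'.Sublist l) (hred : IsReducedWord l' u) :
    BruhatLE u (demazure l) := by
  induction hsub generalizing u with
  | slnil =>
    obtain ⟨h1, -⟩ := hred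
    rw [wordProd_nil] at h1
    subst h1
    exact bruhat_one _
  | @cons l₁ l₂ k h ih =>
    have h1 := ih u hred
    have h2 := bruhat_step k (demazure l₂)
    rw [demazure_cons]
    rw [bruhat_iff_r] at h1 h2 ⊢
    intro i j
    exact le_trans (h2 i j) (h1 i j)
  | @cons_cons l₁ l₂ k h ih =>
    obtain ⟨hw, hl⟩ := hred
    rw [wordProd_cons] at hw
    set x := wordProd l₁ with hxdef
    have hxlen : len x ≤ l₁.length := len_wordProd_le l₁
    rw [List.length_cons] at hl
    have hle : len u ≤ len x + 1 := by
      rw [← hw]; exact len_sgen_mul_le k x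
    have hxred : IsReducedWord l₁ x := ⟨rfl, by omega⟩
    have hxD := ih x hxred
    have hlt : len x < len (sgen k * x) := by rw [hw]; omega
    have hx : x⁻¹ k.castSucc < x⁻¹ k.succ := (len_sgen_lt_iff k x).mp hlt
    have := bruhat_key k x (demazure l₂) hxD hx
    rw [demazure_cons, ← hw]
    exact this
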